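/- Let V be a real topological vector space, let q : V → ℝ be a continuous weak Minkowski norm, let P := { p ∈ V' | ⟨p,x⟩ ≤ q(x) for all x ∈ V }, and for y ∈ V let P_y := { p ∈ P | ⟨p,y⟩ ≤ f(y) }. A function f : V → ℝ is positively homogeneous and nonexpansive with respect to q if, and only if, for every x ∈ V, f(x) = min_{y ∈ V} max_{p ∈ P_y} ⟨p,x⟩, where the inner maximum over P_y is attained for each y and the outer infimum over y is attained. -/

import Mathlib

open Pointwise


/-- With `P` the set of continuous linear forms dominated by a continuous weak
Minkowski norm `q`, and `P_y := {p ∈ P | p y ≤ f y}`, a function `f : V → ℝ` is positively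
homogeneous and nonexpansive with respect to `q` if and only if, for every `x`,
`f x = min_{y} max_{p ∈ P_y} p x`, the inner maximum over `P_y` being attained for each `y`
and the outer minimum over `y` being attained. -/
theorem stmt11 {V : Type*} [AddCommGroup V] [Module ℝ V] [TopologicalSpace V]
    [IsTopologicalAddGroup V] [ContinuousSMul ℝ V]
    (q : V → ℝ) (hq_convex : ConvexOn ℝ Set.univ q)
    (hq_hom : ∀ (c : ℝ), 0 ≤ c → ∀ x : V, q (c • x) = c * q x)
    (hq_cont : Continuous q) (f : V → ℝ) :
    ((∀ (c : ℝ), 0 ≤ c → ∀ x : V, f (c • x) = c * f x) ∧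
        ∀ x y : V, f x - f y ≤ q (x - y)) ↔
      ∀ x : V,
        (∀ y : V, ∃ r : ℝ,
          IsGreatest {s : ℝ | ∃ p : V →L[ℝ] ℝ,
            ((∀ z : V, p z ≤ q z) ∧ p y ≤ f y) ∧ s = p x} r) ∧
        IsLeast {r : ℝ | ∃ y : V,
          IsGreatest {s : ℝ | ∃ p : V →L[ℝ] ℝ,
            ((∀ z : V, p z ≤ q z) ∧ p y ≤ f y) ∧ s = p x} r} (f x) := by
  have hq0 : q 0 = 0 := by simpa using hq_hom 0 le_rfl 0
  have hq_add : ∀ a b : V, q (a + b) ≤ q a + q b := by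
    intro a b
    have h2 : q (a + b) = 2 * q ((1/2 : ℝ) • a + (1/2 : ℝ) • b) := by
      rw [← hq_hom 2 (by norm_num)]
      congr 1
      rw [smul_add, smul_smul, smul_smul]
      norm_num
    have hc := hq_convex.2 (Set.mem_univ a) (Set.mem_univ b)
      (by norm_num : (0:ℝ) ≤ 1/2) (by norm_num : (0:ℝ) ≤ 1/2) (by norm_num)
    simp only [smul_eq_mul] at hc
    rw [h2]; linarith
  -- a linear map dominated by q is continuous
  have hcont : ∀ g : V →ₗ[ℝ] ℝ, (∀ z, g z ≤ q z) → Continuous g := by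
    intro g hg
    apply continuous_of_continuousAt_zero g.toAddMonoidHom
    rw [ContinuousAt, map_zero, Metric.tendsto_nhds]
    intro ε hε
    have hopen : IsOpen {z : V | q z < ε ∧ q (-z) < ε} :=
      (isOpen_lt hq_cont continuous_const).inter
        (isOpen_lt (hq_cont.comp continuous_neg) continuous_const)
    have hU : {z : V | q z < ε ∧ q (-z) < ε} ∈ nhds (0 : V) :=
      hopen.mem_nhds (by simp [hq0, hε])
    filter_upwards [hU] with z hz
    have h1 := hg z
    have h2 := hg (-z)
    rw [map_neg] at h2
    rw [Real.dist_eq, sub_zero, abs_lt]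
    simp only [LinearMap.toAddMonoidHom_coe]
    exact ⟨by linarith [hz.2], by linarith [hz.1]⟩
  constructor
  · rintro ⟨hf_hom, hf_ne⟩ x
    have hf0 : f 0 = 0 := by simpa using hf_hom 0 le_rfl 0
    set N : V → V → ℝ := fun y z =>
      sInf {v : ℝ | ∃ t : ℝ, 0 ≤ t ∧ v = t * f y + q (z - t • y)} with hN
    have hTne : ∀ y z : V, {v : ℝ | ∃ t : ℝ, 0 ≤ t ∧ v = t * f y + q (z - t • y)}.Nonempty :=
      fun y z => ⟨q z, 0, le_rfl, by simp⟩
    have hTlb : ∀ y z : V, ∀ v ∈ {v : ℝ | ∃ t : ℝ, 0 ≤ t ∧ v = t * f y + q (z - t • y)},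
        f z ≤ v := by
      rintro y z v ⟨t, ht, rfl⟩
      have h1 := hf_ne z (t • y)
      rw [hf_hom t ht y] at h1
      linarith
    have hNle : ∀ y z : V, ∀ t : ℝ, 0 ≤ t → N y z ≤ t * f y + q (z - t • y) := by
      intro y z t ht
      exact csInf_le ⟨f z, hTlb y z⟩ ⟨t, ht, rfl⟩
    have hN_ge : ∀ y z : V, f z ≤ N y z := fun y z => le_csInf (hTne y z) (hTlb y z)
    have hNq : ∀ y z : V, N y z ≤ q z := by
      intro y z
      have := hNle y z 0 le_rfl
      simpa using this
    have hNy : ∀ y : V, N y y ≤ f y := by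
      intro y
      have := hNle y y 1 zero_le_one
      simpa [hq0] using this
    have hN0 : ∀ y : V, N y 0 = 0 := by
      intro y
      have h1 := hN_ge y 0
      have h2 := hNq y 0
      rw [hf0] at h1; rw [hq0] at h2; linarith
    -- subadditivity of N y
    have hN_add : ∀ y z w : V, N y (z + w) ≤ N y z + N y w := by
      intro y z w
      rw [← sub_le_iff_le_add']
      apply le_csInf (hTne y w)
      rintro b ⟨t2, ht2, rfl⟩
      rw [sub_le_iff_le_add', ← sub_le_iff_le_add]
      apply le_csInf (hTne y z)
      rintro a ⟨t1, ht1, rfl⟩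
      rw [sub_le_iff_le_add]
      have key := hNle y (z + w) (t1 + t2) (by linarith)
      have hle : q (z + w - (t1 + t2) • y) ≤ q (z - t1 • y) + q (w - t2 • y) := by
        have := hq_add (z - t1 • y) (w - t2 • y)
        have he : z + w - (t1 + t2) • y = z - t1 • y + (w - t2 • y) := by
          rw [add_smul]; abel
        rw [he]; exact this
      nlinarith [key, hle]
    -- positive homogeneity of N y
    have hN_smul : ∀ (y z : V) (c : ℝ), 0 ≤ c → N y (c • z) = c * N y z := by
      intro y z c hc
      rcases eq_or_lt_of_le hc with h | hc'
      · rw [← h, zero_smul, hN0, zero_mul]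
      have hset : {v : ℝ | ∃ t : ℝ, 0 ≤ t ∧ v = t * f y + q (c • z - t • y)} =
          c • {v : ℝ | ∃ t : ℝ, 0 ≤ t ∧ v = t * f y + q (z - t • y)} := by
        ext v
        constructor
        · rintro ⟨t, ht, rfl⟩
          refine ⟨(t / c) * f y + q (z - (t / c) • y), ⟨t / c, by positivity, rfl⟩, ?_⟩
          show c * _ = _
          rw [mul_add, ← hq_hom c hc, smul_sub, smul_smul,
            mul_div_cancel₀ _ (ne_of_gt hc')]
          field_simp
        · rintro ⟨v', ⟨t, ht, rfl⟩, rfl⟩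
          refine ⟨c * t, by positivity, ?_⟩
          show c * _ = _
          rw [mul_add, ← hq_hom c hc, smul_sub, smul_smul]
          ring_nf
      show sInf _ = c * sInf _
      rw [hset, Real.sInf_smul_of_nonneg hc]
      rfl
    -- Hahn-Banach: for each y there is p ∈ P_y with p x = N y x
    have hHB : ∀ y : V, ∃ p : V →L[ℝ] ℝ,
        ((∀ z : V, p z ≤ q z) ∧ p y ≤ f y) ∧ p x = N y x := by
      intro y
      have H : ∀ c : ℝ, c • x = 0 → c • (N y x) = 0 := by
        intro c hc
        rcases smul_eq_zero.1 hc with h | h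
        · rw [h, zero_smul]
        · rw [h, hN0, smul_zero]
      set pm := LinearPMap.mkSpanSingleton' (σ := RingHom.id ℝ) x (N y x) H with hpm
      have hdom : pm.domain = Submodule.span ℝ {x} :=
        LinearPMap.domain_mkSpanSingleton x (N y x) H
      have hub : ∀ u : pm.domain, pm u ≤ N y u := by
        intro u
        have hu : (u : V) ∈ Submodule.span ℝ {x} := hdom ▸ u.2
        obtain ⟨c, hc⟩ := Submodule.mem_span_singleton.1 hu
        have hmem : c • x ∈ pm.domain := by
          rw [hdom]; exact Submodule.smul_mem _ c (Submodule.mem_span_singleton_self x)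
        have hval : pm u = c * N y x := by
          have h1 : u = ⟨c • x, hmem⟩ := Subtype.ext hc.symm
          have h2 := LinearPMap.mkSpanSingleton'_apply x (N y x) H c hmem
          rw [h1, h2, RingHom.id_apply, smul_eq_mul]
        rw [hval, ← hc]
        rcases le_or_gt 0 c with h | h
        · rw [hN_smul y x c h]
        · have h1 : N y ((c • x) + ((-c) • x)) ≤ N y (c • x) + N y ((-c) • x) :=
            hN_add y _ _
          have h2 : (c • x) + ((-c) • x) = (0 : V) := by
            rw [← add_smul]; simp
          rw [h2, hN0] at h1
          rw [hN_smul y x (-c) (by linarith)] at h1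
          linarith
      obtain ⟨g, hg_ext, hg_le⟩ := exists_extension_of_le_sublinear pm (N y)
        (fun c hc z => hN_smul y z c hc.le) (hN_add y) hub
      have hgq : ∀ z, g z ≤ q z := fun z => (hg_le z).trans (hNq y z)
      have hgx : g x = N y x := by
        have hx : x ∈ pm.domain := by
          rw [hdom]; exact Submodule.mem_span_singleton_self x
        have h1 := hg_ext ⟨x, hx⟩
        have hmem : (1:ℝ) • x ∈ pm.domain := by
          rw [hdom]; exact Submodule.smul_mem _ 1 (Submodule.mem_span_singleton_self x)
        have h2 : pm ⟨x, hx⟩ = N y x := by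
          have h3 := LinearPMap.mkSpanSingleton'_apply x (N y x) H 1 hmem
          have h4 : (⟨x, hx⟩ : pm.domain) = ⟨(1:ℝ) • x, hmem⟩ :=
            Subtype.ext (one_smul ℝ x).symm
          rw [h4, h3, RingHom.id_apply, one_smul]
        rw [h1, h2]
      refine ⟨⟨g, hcont g hgq⟩, ⟨hgq, (hg_le y).trans (hNy y)⟩, hgx⟩
    -- upper bound: every p ∈ P_y satisfies p x ≤ N y x
    have hub : ∀ y : V, ∀ s ∈ {s : ℝ | ∃ p : V →L[ℝ] ℝ,
        ((∀ z : V, p z ≤ q z) ∧ p y ≤ f y) ∧ s = p x}, s ≤ N y x := by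
      rintro y s ⟨p, ⟨hpq, hpy⟩, rfl⟩
      apply le_csInf (hTne y x)
      rintro v ⟨t, ht, rfl⟩
      have h1 : p x = p (x - t • y) + t * p y := by
        rw [map_sub, map_smul, smul_eq_mul]; ring
      have h2 := hpq (x - t • y)
      have h3 : t * p y ≤ t * f y := mul_le_mul_of_nonneg_left hpy ht
      linarith
    have hgreat : ∀ y : V, IsGreatest {s : ℝ | ∃ p : V →L[ℝ] ℝ,
        ((∀ z : V, p z ≤ q z) ∧ p y ≤ f y) ∧ s = p x} (N y x) := by
      intro y
      obtain ⟨p, hp, hpx⟩ := hHB y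
      exact ⟨⟨p, hp, hpx.symm⟩, hub y⟩
    refine ⟨fun y => ⟨N y x, hgreat y⟩, ?_, ?_⟩
    · refine ⟨x, ?_⟩
      have h5 := hgreat x
      rwa [le_antisymm (hNy x) (hN_ge x x)] at h5
    · rintro r ⟨y, hy⟩
      have : r = N y x := hy.unique (hgreat y)
      rw [this]
      exact hN_ge y x
  · intro h
    have hf0 : f 0 = 0 := by
      obtain ⟨y, hy⟩ := (h 0).2.1
      obtain ⟨p, _, hps⟩ := hy.1
      rw [hps, map_zero]
    have key : ∀ c : ℝ, 0 < c → ∀ x : V, f (c • x) ≤ c * f x := by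
      intro c hc x
      obtain ⟨hin, hout⟩ := h (c • x)
      obtain ⟨r, hr⟩ := hin x
      have h1 : f (c • x) ≤ r := hout.2 ⟨x, hr⟩
      obtain ⟨p, ⟨hpq, hpx⟩, hrp⟩ := hr.1
      have h2 : r = c * p x := by rw [hrp, map_smul]; simp
      nlinarith
    constructor
    · intro c hc x
      rcases eq_or_lt_of_le hc with h0 | hc'
      · rw [← h0, zero_smul, hf0, zero_mul]
      have h1 := key c hc' x
      have h2 := key c⁻¹ (by positivity) (c • x)
      rw [smul_smul, inv_mul_cancel₀ (ne_of_gt hc'), one_smul] at h2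
      have : c * f x ≤ f (c • x) := by
        have := mul_le_mul_of_nonneg_left h2 hc
        rw [← mul_assoc, mul_inv_cancel₀ (ne_of_gt hc'), one_mul] at this
        linarith
      linarith
    · intro x y
      obtain ⟨hin, hout⟩ := h x
      obtain ⟨r, hr⟩ := hin y
      have hfx : f x ≤ r := hout.2 ⟨y, hr⟩
      obtain ⟨p, ⟨hpq, hpy⟩, hrp⟩ := hr.1
      have h1 : p x = p (x - y) + p y := by rw [map_sub]; ring
      have h2 := hpq (x - y)
      linarith [hrp ▸ hfx]
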